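/- arXiv:2603.07210 — 3 statements merged into one kernel-verified Lean document; each statement's English description precedes it below -/
import Mathlib

section
/- Fix exponents s₁,…,sₙ ∈ ℕ₊. Let g be a positively semi-quasihomogeneous analytic vector field with quasi-homogeneous part g_m of degree m > 1, and let T be an analytic tensor invariant of type (p,q) of the system ẋ = g(x), decomposed as T = T_l + T_{l+1} + T_{l+2} + ⋯, where each T_r is a quasi-homogeneous tensor field of type (p,q) of degree r with exponents s₁,…,sₙ and T_l is not identically zero. Then T_l is a quasi-homogeneous tensor invariant of the truncated system ẋ = g_m(x), i.e., L_{g_m} T_l = 0. -/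
open scoped BigOperators

/-- Partial derivative of `f : ℂⁿ → ℂ` in the `s`-th coordinate direction at `x`. -/
noncomputable def pderivC {n : ℕ} (f : (Fin n → ℂ) → ℂ) (s : Fin n) (x : Fin n → ℂ) : ℂ :=
  fderiv ℂ f x (Pi.single s 1)

/-- Components of the Lie derivative `L_F T` of a type-`(p,q)` tensor field `T` on `ℂⁿ`
along the vector field `F`. -/
noncomputable def lieDeriv {n p q : ℕ} (F : Fin n → (Fin n → ℂ) → ℂ)
    (T : (Fin p → Fin n) → (Fin q → Fin n) → (Fin n → ℂ) → ℂ)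
    (i : Fin p → Fin n) (j : Fin q → Fin n) (x : Fin n → ℂ) : ℂ :=
  (∑ s, F s x * pderivC (T i j) s x)
    + ∑ a : Fin q, ∑ k, T i (Function.update j a k) x * pderivC (F k) (j a) x
    - ∑ b : Fin p, ∑ l, T (Function.update i b l) j x * pderivC (F (i b)) l x
/-- Weighted scaling `ρ^S x = (ρ^{s₁}x¹, …, ρ^{sₙ}xⁿ)` with exponents `s` and `ρ > 0`. -/
noncomputable def wsc {n : ℕ} (s : Fin n → ℕ) (ρ : ℝ) (x : Fin n → ℂ) : Fin n → ℂ :=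
  fun a => (ρ : ℂ) ^ (s a) * x a

/-- A vector field `g` on `ℂⁿ` is quasi-homogeneous of degree `m` with exponents `s`:
`g^j(ρ^S x) = ρ^{s_j + m − 1} g^j(x)` for all `ρ > 0`. -/
def IsQHVF {n : ℕ} (s : Fin n → ℕ) (m : ℕ) (g : Fin n → (Fin n → ℂ) → ℂ) : Prop :=
  ∀ ρ : ℝ, 0 < ρ → ∀ (x : Fin n → ℂ) (j : Fin n),
    g j (wsc s ρ x) = (ρ : ℂ) ^ (s j + m - 1) * g j x

/-- `g` is positively semi-quasihomogeneous with quasi-homogeneous part `gm` of degree `m`: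
`g = gm + g̃` where `g̃` is a sum of quasi-homogeneous vector fields of degrees all
strictly greater than `m`. -/
def IsPosSemiQH {n : ℕ} (s : Fin n → ℕ) (m : ℕ)
    (gm g : Fin n → (Fin n → ℂ) → ℂ) : Prop :=
  IsQHVF s m gm ∧
    ∃ h : ℕ → Fin n → (Fin n → ℂ) → ℂ,
      (∀ d, IsQHVF s (m + 1 + d) (h d)) ∧
      (∀ (j : Fin n) (x : Fin n → ℂ), HasSum (fun d => h d j x) (g j x - gm j x))

/-- A tensor field `T` of type `(p,q)` is quasi-homogeneous of degree `l` with
exponents `s`: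
`T^{i}_{j}(ρ^S x) = ρ^{l − s_{j₁} − ⋯ − s_{j_q} + s_{i₁} + ⋯ + s_{i_p}} T^{i}_{j}(x)`. -/
def IsQHTF {n p q : ℕ} (s : Fin n → ℕ) (l : ℤ)
    (T : (Fin p → Fin n) → (Fin q → Fin n) → (Fin n → ℂ) → ℂ) : Prop :=
  ∀ ρ : ℝ, 0 < ρ → ∀ (i : Fin p → Fin n) (j : Fin q → Fin n) (x : Fin n → ℂ),
    T i j (wsc s ρ x)
      = (ρ : ℂ) ^ (l - ∑ a, (s (j a) : ℤ) + ∑ b, (s (i b) : ℤ)) * T i j x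



namespace QHX

open Filter Topology Metric


/-- Uniqueness: if a power series with summable-on-(0,1) coefficients sums to 0
on (0,1), all coefficients vanish. -/
lemma coeff_zero_of_hasSum_zero :
    ∀ (a : ℕ → ℂ), (∀ ρ : ℝ, 0 < ρ → ρ < 1 → HasSum (fun e => a e * (ρ : ℂ) ^ e) 0) →
    ∀ e, a e = 0 := by
  have key : ∀ (a : ℕ → ℂ),
      (∀ ρ : ℝ, 0 < ρ → ρ < 1 → HasSum (fun e => a e * (ρ : ℂ) ^ e) 0) → a 0 = 0 := by
    intro a hyp
    have hhalf := (hyp (1/2) (by norm_num) (by norm_num)).summable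
    have hnorm : Summable (fun e => ‖a e * ((1/2 : ℝ) : ℂ) ^ e‖) := by
      rwa [summable_norm_iff]
    -- limit of tsum as ρ → 0⁺
    have hlim : Tendsto (fun ρ : ℝ => ∑' e, a e * (ρ : ℂ) ^ e) (𝓝[>] (0:ℝ))
        (𝓝 (∑' e, if e = 0 then a 0 else 0)) := by
      apply tendsto_tsum_of_dominated_convergence hnorm
      · intro e
        cases e with
        | zero => simp only [pow_zero, mul_one, if_pos rfl]; exact tendsto_const_nhds
        | succ e =>
          simp only [Nat.succ_ne_zero, if_false]
          have hρ : Tendsto (fun ρ : ℝ => (ρ : ℂ)) (𝓝[>] (0:ℝ)) (𝓝 0) := by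
            have := (Complex.continuous_ofReal.tendsto 0)
            simpa using this.mono_left nhdsWithin_le_nhds
          have : Tendsto (fun ρ : ℝ => a (e+1) * (ρ:ℂ)^(e+1)) (𝓝[>] (0:ℝ)) (𝓝 (a (e+1) * 0 ^ (e+1))) :=
            (hρ.pow (e+1)).const_mul _
          simpa using this
      · filter_upwards [Ioo_mem_nhdsGT (by norm_num : (0:ℝ) < 1/2)]
          with ρ hρ e
        have h1 : ‖(ρ:ℂ)‖ ≤ ‖((1/2:ℝ):ℂ)‖ := by
          simp only [Complex.norm_real]
          rw [Real.norm_eq_abs, Real.norm_eq_abs, abs_of_pos hρ.1, abs_of_pos (by norm_num : (0:ℝ) < 1/2)]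
          exact le_of_lt hρ.2
        calc ‖a e * (ρ:ℂ)^e‖ = ‖a e‖ * ‖(ρ:ℂ)‖^e := by rw [norm_mul, norm_pow]
        _ ≤ ‖a e‖ * ‖((1/2:ℝ):ℂ)‖^e := by
            gcongr
        _ = ‖a e * ((1/2:ℝ):ℂ)^e‖ := by rw [norm_mul, norm_pow]
    have heq : ∀ᶠ ρ : ℝ in 𝓝[>] (0:ℝ), (∑' e, a e * (ρ:ℂ)^e) = 0 := by
      filter_upwards [Ioo_mem_nhdsGT (by norm_num : (0:ℝ) < 1)]
        with ρ hρ
      exact (hyp ρ hρ.1 hρ.2).tsum_eq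
    have hzero : Tendsto (fun _ : ℝ => (0:ℂ)) (𝓝[>] (0:ℝ)) (𝓝 (∑' e, if e = 0 then a 0 else 0)) :=
      hlim.congr' heq
    have h0 : (0 : ℂ) = ∑' e, if e = 0 then a 0 else 0 :=
      tendsto_nhds_unique tendsto_const_nhds hzero
    have hts : (∑' e : ℕ, if e = 0 then a 0 else 0) = a 0 := tsum_ite_eq (0:ℕ) (fun _ => a 0)
    rw [← hts]
    exact h0.symm
  intro a hyp e
  induction e generalizing a with
  | zero => exact key a hyp
  | succ e ih =>
    refine ih (fun d => a (d + 1)) ?_ 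
    intro ρ h0 h1
    have ha0 : a 0 = 0 := key a hyp
    have h := hyp ρ h0 h1
    have hshift : HasSum (fun e => a (e + 1) * (ρ:ℂ)^(e+1)) 0 := by
      refine (hasSum_nat_add_iff (f := fun e => a e * (ρ:ℂ)^e) 1).2 ?_
      simpa [ha0] using h
    have hρne : ((ρ:ℂ)) ≠ 0 := by
      simp only [ne_eq, Complex.ofReal_eq_zero]; exact ne_of_gt h0
    have h2 := hshift.mul_left ((ρ:ℂ)⁻¹)
    rw [mul_zero] at h2
    have hfun : (fun e => a (e + 1) * (ρ:ℂ)^e) = fun e => (ρ:ℂ)⁻¹ * (a (e+1) * (ρ:ℂ)^(e+1)) := by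
      funext e
      rw [pow_succ]
      field_simp
    rw [hfun]
    exact h2

/-- Dominated-convergence limit of a power series sum as `ρ → 0⁺`. -/
lemma tendsto_c0 (c : ℕ → ℂ) (S : ℝ → ℂ)
    (hsum : ∀ ρ : ℝ, 0 < ρ → ρ < 1 → HasSum (fun d => c d * (ρ : ℂ) ^ d) (S ρ)) :
    Tendsto S (𝓝[>] (0:ℝ)) (𝓝 (c 0)) := by
  have hhalf := (hsum (1/2) (by norm_num) (by norm_num)).summable
  have hnorm : Summable (fun d => ‖c d * ((1/2 : ℝ) : ℂ) ^ d‖) := by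
    rwa [summable_norm_iff]
  have hlim : Tendsto (fun ρ : ℝ => ∑' d, c d * (ρ : ℂ) ^ d) (𝓝[>] (0:ℝ))
      (𝓝 (∑' d, if d = 0 then c 0 else 0)) := by
    apply tendsto_tsum_of_dominated_convergence hnorm
    · intro d
      cases d with
      | zero => simp only [pow_zero, mul_one, if_pos rfl]; exact tendsto_const_nhds
      | succ d =>
        simp only [Nat.succ_ne_zero, if_false]
        have hρ : Tendsto (fun ρ : ℝ => (ρ : ℂ)) (𝓝[>] (0:ℝ)) (𝓝 0) := by
          have := (Complex.continuous_ofReal.tendsto 0)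
          simpa using this.mono_left nhdsWithin_le_nhds
        have : Tendsto (fun ρ : ℝ => c (d+1) * (ρ:ℂ)^(d+1)) (𝓝[>] (0:ℝ))
            (𝓝 (c (d+1) * 0 ^ (d+1))) := (hρ.pow (d+1)).const_mul _
        simpa using this
    · filter_upwards [Ioo_mem_nhdsGT (by norm_num : (0:ℝ) < 1/2)]
        with ρ hρ d
      have h1 : ‖(ρ:ℂ)‖ ≤ ‖((1/2:ℝ):ℂ)‖ := by
        simp only [Complex.norm_real]
        rw [Real.norm_eq_abs, Real.norm_eq_abs, abs_of_pos hρ.1,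
          abs_of_pos (by norm_num : (0:ℝ) < 1/2)]
        exact le_of_lt hρ.2
      calc ‖c d * (ρ:ℂ)^d‖ = ‖c d‖ * ‖(ρ:ℂ)‖^d := by rw [norm_mul, norm_pow]
      _ ≤ ‖c d‖ * ‖((1/2:ℝ):ℂ)‖^d := by gcongr
      _ = ‖c d * ((1/2:ℝ):ℂ)^d‖ := by rw [norm_mul, norm_pow]
  have heq : ∀ᶠ ρ : ℝ in 𝓝[>] (0:ℝ), (∑' d, c d * (ρ:ℂ)^d) = S ρ := by
    filter_upwards [Ioo_mem_nhdsGT (by norm_num : (0:ℝ) < 1)]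
      with ρ hρ
    exact (hsum ρ hρ.1 hρ.2).tsum_eq
  have hts : (∑' d : ℕ, if d = 0 then c 0 else 0) = c 0 := tsum_ite_eq (0:ℕ) (fun _ => c 0)
  rw [← hts]
  exact hlim.congr' heq

/-- Membership of a small real in the unit EMetric ball of `ℂ`. -/
lemma mem_unit_ball {ρ : ℝ} (h0 : 0 < ρ) (h1 : ρ < 1) :
    ((ρ:ℂ)) ∈ EMetric.ball (0:ℂ) ((1:NNReal):ENNReal) := by
  show edist (ρ:ℂ) 0 < _
  rw [edist_zero_right]
  have : ‖(ρ:ℂ)‖₊ < (1:NNReal) := by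
    rw [← NNReal.coe_lt_coe]
    simp only [coe_nnnorm, NNReal.coe_one, Complex.norm_real]
    rw [Real.norm_eq_abs, abs_of_pos h0]
    exact h1
  rw [enorm_eq_nnnorm]
  exact ENNReal.coe_lt_coe.2 this

/-- For an entire `h : ℂ → ℂ`, the Taylor coefficients at `0` relate to iterated derivs. -/
lemma iteratedDeriv_eq_factorial_mul_coeff (h : ℂ → ℂ) (hh : Differentiable ℂ h) (e : ℕ) :
    iteratedDeriv e h 0 =
      (Nat.factorial e : ℂ) * (cauchyPowerSeries h 0 1).coeff e := by
  have hp : HasFPowerSeriesOnBall h (cauchyPowerSeries h 0 1) 0 ((1:NNReal):ENNReal) :=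
    (hh.differentiableOn (s := Metric.closedBall (0:ℂ) (1:NNReal))).hasFPowerSeriesOnBall
      one_pos
  have := hp.factorial_smul (1:ℂ) e
  rw [FormalMultilinearSeries.apply_eq_pow_smul_coeff, one_pow, one_smul] at this
  rw [iteratedDeriv_eq_iteratedFDeriv, ← this, nsmul_eq_mul]

lemma tendsto_of_iteratedDeriv_eq_zero (h : ℂ → ℂ) (hh : Differentiable ℂ h) (k0 : ℕ)
    (hvan : ∀ e, e < k0 → iteratedDeriv e h 0 = 0) :
    Tendsto (fun ρ : ℝ => (ρ:ℂ)^(-(k0:ℤ)) * h ρ) (𝓝[>] (0:ℝ))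
      (𝓝 ((Nat.factorial k0 : ℂ)⁻¹ * iteratedDeriv k0 h 0)) := by
  set p := cauchyPowerSeries h 0 1 with hpdef
  have hp : HasFPowerSeriesOnBall h p 0 ((1:NNReal):ENNReal) :=
    (hh.differentiableOn (s := Metric.closedBall (0:ℂ) (1:NNReal))).hasFPowerSeriesOnBall
      one_pos
  have hcoeff : ∀ e, iteratedDeriv e h 0 = (Nat.factorial e : ℂ) * p.coeff e :=
    fun e => iteratedDeriv_eq_factorial_mul_coeff h hh e
  have hcz : ∀ e, e < k0 → p.coeff e = 0 := by
    intro e he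
    have h1 := (hcoeff e).symm.trans (hvan e he)
    have hf : (Nat.factorial e : ℂ) ≠ 0 := Nat.cast_ne_zero.2 (Nat.factorial_ne_zero e)
    rcases mul_eq_zero.1 h1 with h2 | h2
    · exact absurd h2 hf
    · exact h2
  have hsum : ∀ ρ : ℝ, 0 < ρ → ρ < 1 →
      HasSum (fun d => p.coeff (k0 + d) * (ρ:ℂ)^d) ((ρ:ℂ)^(-(k0:ℤ)) * h ρ) := by
    intro ρ h0 h1
    have hρne : ((ρ:ℂ)) ≠ 0 := by
      simp only [ne_eq, Complex.ofReal_eq_zero]; exact ne_of_gt h0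
    have base : HasSum (fun e => (ρ:ℂ)^e * p.coeff e) (h ρ) := by
      have := hp.hasSum (mem_unit_ball h0 h1)
      simp only [FormalMultilinearSeries.apply_eq_pow_smul_coeff, smul_eq_mul, zero_add] at this
      exact this
    have shift : HasSum (fun d => (ρ:ℂ)^(d + k0) * p.coeff (d + k0)) (h ρ) := by
      refine (hasSum_nat_add_iff (f := fun e => (ρ:ℂ)^e * p.coeff e) k0).2 ?_
      have hz : (∑ i ∈ Finset.range k0, (ρ:ℂ)^i * p.coeff i) = 0 :=
        Finset.sum_eq_zero fun i hi => by
          rw [hcz i (Finset.mem_range.1 hi), mul_zero]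
      rw [hz, add_zero]
      exact base
    have hfun : (fun d => p.coeff (k0 + d) * (ρ:ℂ)^d)
        = fun d => (ρ:ℂ)^(-(k0:ℤ)) * ((ρ:ℂ)^(d + k0) * p.coeff (d + k0)) := by
      funext d
      rw [Nat.add_comm d k0, zpow_neg, zpow_natCast, pow_add]
      have hpk : ((ρ:ℂ))^k0 ≠ 0 := pow_ne_zero _ hρne
      field_simp
    rw [hfun]
    exact shift.mul_left _
  have hc0 : p.coeff (k0 + 0) = (Nat.factorial k0 : ℂ)⁻¹ * iteratedDeriv k0 h 0 := by
    rw [Nat.add_zero, hcoeff k0]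
    have hf : (Nat.factorial k0 : ℂ) ≠ 0 := Nat.cast_ne_zero.2 (Nat.factorial_ne_zero k0)
    field_simp
  have hT := tendsto_c0 (fun d => p.coeff (k0 + d)) _ hsum
  beta_reduce at hT
  rwa [hc0] at hT


lemma iteratedDeriv_of_hasSum (h : ℂ → ℂ) (hh : Differentiable ℂ h) (c : ℕ → ℂ) (k0 : ℕ)
    (hsum : ∀ ρ : ℝ, 0 < ρ → ρ < 1 → HasSum (fun d => (ρ:ℂ)^(k0 + d) * c d) (h ρ)) :
    (∀ e, e < k0 → iteratedDeriv e h 0 = 0) ∧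
      iteratedDeriv k0 h 0 = (Nat.factorial k0 : ℂ) * c 0 := by
  set p := cauchyPowerSeries h 0 1 with hpdef
  have hp : HasFPowerSeriesOnBall h p 0 ((1:NNReal):ENNReal) :=
    (hh.differentiableOn (s := Metric.closedBall (0:ℂ) (1:NNReal))).hasFPowerSeriesOnBall
      one_pos
  have hcoeff : ∀ e, iteratedDeriv e h 0 = (Nat.factorial e : ℂ) * p.coeff e :=
    fun e => iteratedDeriv_eq_factorial_mul_coeff h hh e
  set b : ℕ → ℂ := fun e => if k0 ≤ e then c (e - k0) else 0 with hbdef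
  have key : ∀ e, p.coeff e - b e = 0 := by
    apply coeff_zero_of_hasSum_zero
    intro ρ h0 h1
    have base : HasSum (fun e => p.coeff e * (ρ:ℂ)^e) (h ρ) := by
      have := hp.hasSum (mem_unit_ball h0 h1)
      simp only [FormalMultilinearSeries.apply_eq_pow_smul_coeff, smul_eq_mul, zero_add] at this
      exact this.congr_fun fun e => mul_comm _ _
    have hb : HasSum (fun e => b e * (ρ:ℂ)^e) (h ρ) := by
      refine (Function.Injective.hasSum_iff (f := fun e => b e * (ρ:ℂ)^e)
        (g := fun d => k0 + d) (fun x y hxy => Nat.add_left_cancel hxy) ?_).1 ?_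
      · intro e he
        have : ¬ k0 ≤ e := by
          intro hle
          exact he ⟨e - k0, show k0 + (e - k0) = e by omega⟩
        simp [hbdef, this]
      · have : (fun e => b e * (ρ:ℂ)^e) ∘ (fun d => k0 + d)
            = fun d => (ρ:ℂ)^(k0 + d) * c d := by
          funext d
          simp only [Function.comp_apply, hbdef, Nat.le_add_right, if_true,
            Nat.add_sub_cancel_left]
          ring
        rw [this]
        exact hsum ρ h0 h1
    have := base.sub hb
    rw [sub_self] at this
    exact this.congr_fun fun e => sub_mul _ _ _
  have hcb : ∀ e, p.coeff e = b e := fun e => by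
    have := key e; linear_combination this
  constructor
  · intro e he
    rw [hcoeff e, hcb e, hbdef]
    simp [Nat.not_le.2 he]
  · rw [hcoeff k0, hcb k0, hbdef]
    simp

variable {n : ℕ}

noncomputable def DOp (F : (Fin n → ℂ) × ℂ → ℂ) : (Fin n → ℂ) × ℂ → ℂ :=
  fun w => fderiv ℂ F w (0, 1)

noncomputable def POp (v : Fin n → ℂ) (F : (Fin n → ℂ) × ℂ → ℂ) : (Fin n → ℂ) × ℂ → ℂ :=
  fun w => fderiv ℂ F w (v, 0)

lemma an_dir {F : (Fin n → ℂ) × ℂ → ℂ} (hF : AnalyticOnNhd ℂ F Set.univ)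
    (v₀ : (Fin n → ℂ) × ℂ) :
    AnalyticOnNhd ℂ (fun w => fderiv ℂ F w v₀) Set.univ :=
  (ContinuousLinearMap.apply ℂ ℂ v₀).comp_analyticOnNhd hF.fderiv

lemma an_DOp {F : (Fin n → ℂ) × ℂ → ℂ} (hF : AnalyticOnNhd ℂ F Set.univ) :
    AnalyticOnNhd ℂ (DOp F) Set.univ := an_dir hF _

lemma an_POp {F : (Fin n → ℂ) × ℂ → ℂ} (hF : AnalyticOnNhd ℂ F Set.univ) (v : Fin n → ℂ) :
    AnalyticOnNhd ℂ (POp v F) Set.univ := an_dir hF _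

lemma an_DOp_iter {F : (Fin n → ℂ) × ℂ → ℂ} (hF : AnalyticOnNhd ℂ F Set.univ) (e : ℕ) :
    AnalyticOnNhd ℂ (DOp^[e] F) Set.univ := by
  induction e generalizing F with
  | zero => exact hF
  | succ e ih =>
    rw [Function.iterate_succ_apply]
    exact ih (an_DOp hF)

lemma hasDerivAt_slice {F : (Fin n → ℂ) × ℂ → ℂ} (hF : AnalyticOnNhd ℂ F Set.univ)
    (x : Fin n → ℂ) (z : ℂ) :
    HasDerivAt (fun t => F (x, t)) (DOp F (x, z)) z := by
  have hd : DifferentiableAt ℂ F (x, z) := (hF _ (Set.mem_univ _)).differentiableAt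
  have inner : HasDerivAt (fun t : ℂ => ((x, t) : (Fin n → ℂ) × ℂ)) ((0:Fin n → ℂ), (1:ℂ)) z :=
    (hasDerivAt_const z x).prodMk (hasDerivAt_id z)
  exact hd.hasFDerivAt.comp_hasDerivAt z inner

lemma deriv_slice {F : (Fin n → ℂ) × ℂ → ℂ} (hF : AnalyticOnNhd ℂ F Set.univ)
    (x : Fin n → ℂ) :
    deriv (fun t => F (x, t)) = fun z => DOp F (x, z) := by
  funext z
  exact (hasDerivAt_slice hF x z).deriv

lemma fderiv_slice {F : (Fin n → ℂ) × ℂ → ℂ} (hF : AnalyticOnNhd ℂ F Set.univ)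
    (v : Fin n → ℂ) (x : Fin n → ℂ) (z : ℂ) :
    fderiv ℂ (fun y => F (y, z)) x v = fderiv ℂ F (x, z) (v, 0) := by
  have hd : DifferentiableAt ℂ F (x, z) := (hF _ (Set.mem_univ _)).differentiableAt
  have inner : HasFDerivAt (fun y : Fin n → ℂ => ((y, z) : (Fin n → ℂ) × ℂ))
      ((ContinuousLinearMap.id ℂ (Fin n → ℂ)).prod 0) x :=
    (hasFDerivAt_id x).prodMk (hasFDerivAt_const z x)
  have h2 := (hd.hasFDerivAt.comp x inner).fderiv
  rw [Function.comp_def] at h2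
  rw [h2]
  rfl

lemma diff_slice {F : (Fin n → ℂ) × ℂ → ℂ} (hF : AnalyticOnNhd ℂ F Set.univ) (z : ℂ) :
    Differentiable ℂ (fun y => F (y, z)) := by
  intro x
  have hd : DifferentiableAt ℂ F (x, z) := (hF _ (Set.mem_univ _)).differentiableAt
  exact hd.comp x ((hasFDerivAt_id x).prodMk (hasFDerivAt_const z x)).differentiableAt

lemma diff_slice' {F : (Fin n → ℂ) × ℂ → ℂ} (hF : AnalyticOnNhd ℂ F Set.univ)
    (x : Fin n → ℂ) :
    Differentiable ℂ (fun t => F (x, t)) := fun z => (hasDerivAt_slice hF x z).differentiableAt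

lemma DOp_POp_comm {F : (Fin n → ℂ) × ℂ → ℂ} (hF : AnalyticOnNhd ℂ F Set.univ)
    (v : Fin n → ℂ) (w : (Fin n → ℂ) × ℂ) :
    DOp (POp v F) w = POp v (DOp F) w := by
  set f' := fderiv ℂ F with hf'def
  have hf'an : AnalyticOnNhd ℂ f' Set.univ := hF.fderiv
  have hf'' : HasFDerivAt f' (fderiv ℂ f' w) w :=
    (hf'an _ (Set.mem_univ _)).differentiableAt.hasFDerivAt
  have hsymm := second_derivative_symmetric (𝕜 := ℂ)
    (fun y => (hF _ (Set.mem_univ _)).differentiableAt.hasFDerivAt) hf''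
  have key : ∀ u₀ u₁ : (Fin n → ℂ) × ℂ,
      fderiv ℂ (fun w' => f' w' u₀) w u₁ = fderiv ℂ f' w u₁ u₀ := by
    intro u₀ u₁
    have : fderiv ℂ (fun w' => f' w' u₀) w
        = (ContinuousLinearMap.apply ℂ ℂ u₀).comp (fderiv ℂ f' w) := by
      exact (((ContinuousLinearMap.apply ℂ ℂ u₀).hasFDerivAt).comp w hf'').fderiv
    rw [this]
    rfl
  show fderiv ℂ (fun w' => f' w' (v, 0)) w (0, 1) = fderiv ℂ (fun w' => f' w' (0, 1)) w (v, 0)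
  rw [key, key]
  exact hsymm _ _

lemma POp_DOp_iter_comm {F : (Fin n → ℂ) × ℂ → ℂ} (hF : AnalyticOnNhd ℂ F Set.univ)
    (v : Fin n → ℂ) (e : ℕ) (w : (Fin n → ℂ) × ℂ) :
    POp v (DOp^[e] F) w = DOp^[e] (POp v F) w := by
  induction e generalizing F with
  | zero => rfl
  | succ e ih =>
    rw [Function.iterate_succ_apply, Function.iterate_succ_apply]
    rw [ih (an_DOp hF)]
    have hcomm : POp v (DOp F) = DOp (POp v F) :=
      funext fun w' => (DOp_POp_comm hF v w').symm
    rw [hcomm]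

lemma slice_iteratedDeriv {F : (Fin n → ℂ) × ℂ → ℂ} (hF : AnalyticOnNhd ℂ F Set.univ)
    (e : ℕ) (x : Fin n → ℂ) (z : ℂ) :
    iteratedDeriv e (fun t => F (x, t)) z = DOp^[e] F (x, z) := by
  induction e generalizing F with
  | zero => rfl
  | succ e ih =>
    rw [iteratedDeriv_succ', deriv_slice hF x, ih (an_DOp hF), Function.iterate_succ_apply]



noncomputable def scaleL (s : Fin n → ℕ) (z : ℂ) : (Fin n → ℂ) →L[ℂ] (Fin n → ℂ) :=
  ContinuousLinearMap.pi fun a => z ^ (s a) • ContinuousLinearMap.proj a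

lemma scaleL_apply (s : Fin n → ℕ) (z : ℂ) (x : Fin n → ℂ) :
    scaleL s z x = fun a => z ^ s a * x a := by
  funext a
  simp [scaleL]

lemma wsc_eq (s : Fin n → ℕ) (ρ : ℝ) (x : Fin n → ℂ) : wsc s ρ x = scaleL s (ρ:ℂ) x := by
  rw [scaleL_apply]
  rfl

noncomputable def Phi (s : Fin n → ℕ) (K : ℕ) (f : (Fin n → ℂ) → ℂ) :
    (Fin n → ℂ) × ℂ → ℂ :=
  fun w => w.2 ^ K * f (scaleL s w.2 w.1)

lemma an_Phi (s : Fin n → ℕ) (K : ℕ) {f : (Fin n → ℂ) → ℂ}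
    (hf : AnalyticOnNhd ℂ f Set.univ) : AnalyticOnNhd ℂ (Phi s K f) Set.univ := by
  apply AnalyticOnNhd.mul
  · exact analyticOnNhd_snd.pow K
  · have hinner : AnalyticOnNhd ℂ
        (fun w : (Fin n → ℂ) × ℂ => (fun a => w.2 ^ s a * w.1 a : Fin n → ℂ)) Set.univ := by
      apply AnalyticOnNhd.pi
      intro a
      exact (analyticOnNhd_snd.pow (s a)).mul
        (((ContinuousLinearMap.proj a : (Fin n → ℂ) →L[ℂ] ℂ).comp
          (ContinuousLinearMap.fst ℂ (Fin n → ℂ) ℂ)).analyticOnNhd Set.univ)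
    have heq : (fun w : (Fin n → ℂ) × ℂ => f (scaleL s w.2 w.1))
        = f ∘ (fun w : (Fin n → ℂ) × ℂ => (fun a => w.2 ^ s a * w.1 a : Fin n → ℂ)) := by
      funext w
      simp only [Function.comp_apply]
      rw [scaleL_apply]
    rw [heq]
    exact hf.comp hinner (Set.mapsTo_univ _ _)

theorem master (s : Fin n → ℕ) (f : (Fin n → ℂ) → ℂ) (hf : AnalyticOnNhd ℂ f Set.univ)
    (K k0 : ℕ) (c : ℕ → (Fin n → ℂ) → ℂ)
    (hyp : ∀ (x : Fin n → ℂ) (ρ : ℝ), 0 < ρ → ρ < 1 →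
      HasSum (fun d => (ρ:ℂ)^(k0 + d) * c d x) ((ρ:ℂ)^K * f (wsc s ρ x))) :
    (∀ x, Tendsto (fun ρ : ℝ => (ρ:ℂ)^((K:ℤ) - (k0:ℤ)) * f (wsc s ρ x)) (𝓝[>] (0:ℝ))
        (𝓝 (c 0 x))) ∧
    (∀ (σ : Fin n) (x : Fin n → ℂ),
      Tendsto (fun ρ : ℝ => (ρ:ℂ)^((K:ℤ) + (s σ : ℤ) - (k0:ℤ)) * pderivC f σ (wsc s ρ x))
        (𝓝[>] (0:ℝ)) (𝓝 (pderivC (c 0) σ x))) := by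
  have hfac : (Nat.factorial k0 : ℂ) ≠ 0 := Nat.cast_ne_zero.2 (Nat.factorial_ne_zero k0)
  set Φ := Phi s K f with hΦdef
  have hΦ : AnalyticOnNhd ℂ Φ Set.univ := an_Phi s K hf
  have hslice : ∀ x, Differentiable ℂ (fun z => Φ (x, z)) := fun x => diff_slice' hΦ x
  have hΦρ : ∀ (x : Fin n → ℂ) (ρ : ℝ), Φ (x, (ρ:ℂ)) = (ρ:ℂ)^K * f (wsc s ρ x) := by
    intro x ρ
    show ((ρ:ℂ))^K * f (scaleL s (ρ:ℂ) x) = _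
    rw [wsc_eq]
  have hsl : ∀ x, (∀ e, e < k0 → iteratedDeriv e (fun z => Φ (x,z)) 0 = 0) ∧
      iteratedDeriv k0 (fun z => Φ (x,z)) 0 = (Nat.factorial k0 : ℂ) * c 0 x := by
    intro x
    apply iteratedDeriv_of_hasSum _ (hslice x) (fun d => c d x) k0
    intro ρ h0 h1
    have h2 := hyp x ρ h0 h1
    rw [← hΦρ x ρ] at h2
    exact h2
  have hvan : ∀ e, e < k0 → ∀ x, DOp^[e] Φ (x, 0) = 0 := fun e he x => by
    rw [← slice_iteratedDeriv hΦ e x 0]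
    exact (hsl x).1 e he
  have hval : ∀ x, DOp^[k0] Φ (x, 0) = (Nat.factorial k0 : ℂ) * c 0 x := fun x => by
    rw [← slice_iteratedDeriv hΦ k0 x 0]
    exact (hsl x).2
  have hC : ∀ x, Tendsto (fun ρ : ℝ => (ρ:ℂ)^((K:ℤ) - (k0:ℤ)) * f (wsc s ρ x)) (𝓝[>] (0:ℝ))
      (𝓝 (c 0 x)) := by
    intro x
    have hT := tendsto_of_iteratedDeriv_eq_zero _ (hslice x) k0 (hsl x).1
    rw [(hsl x).2] at hT
    have hval2 : (Nat.factorial k0 : ℂ)⁻¹ * ((Nat.factorial k0 : ℂ) * c 0 x) = c 0 x := by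
      field_simp
    rw [hval2] at hT
    refine Tendsto.congr' ?_ hT
    filter_upwards [self_mem_nhdsWithin] with ρ (hρ : 0 < ρ)
    have hρne : ((ρ:ℂ)) ≠ 0 := by
      simp only [ne_eq, Complex.ofReal_eq_zero]; exact ne_of_gt hρ
    show (ρ:ℂ)^(-(k0:ℤ)) * Φ (x, (ρ:ℂ)) = (ρ:ℂ)^((K:ℤ) - (k0:ℤ)) * f (wsc s ρ x)
    rw [hΦρ x ρ, ← mul_assoc]
    congr 1
    rw [← zpow_natCast (ρ:ℂ) K, ← zpow_add₀ hρne]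
    congr 1
    ring
  refine ⟨hC, ?_⟩
  intro σ x
  have hGan : AnalyticOnNhd ℂ (DOp^[k0] Φ) Set.univ := an_DOp_iter hΦ k0
  have hc0fun : c 0 = fun y => (Nat.factorial k0 : ℂ)⁻¹ * DOp^[k0] Φ (y, 0) := by
    funext y
    rw [hval y]
    field_simp
  have hB : pderivC (c 0) σ x
      = (Nat.factorial k0 : ℂ)⁻¹ * fderiv ℂ (DOp^[k0] Φ) (x,0) (Pi.single σ 1, 0) := by
    simp only [pderivC]
    rw [hc0fun, fderiv_const_mul ((diff_slice hGan 0) x), ContinuousLinearMap.smul_apply,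
      smul_eq_mul, fderiv_slice hGan (Pi.single σ 1) x 0]
  have hPOp : ∀ z : ℂ,
      POp (Pi.single σ 1) Φ (x, z) = z^(K + s σ) * pderivC f σ (scaleL s z x) := by
    intro z
    have h1 : POp (Pi.single σ 1) Φ (x, z) = fderiv ℂ (fun y => Φ (y, z)) x (Pi.single σ 1) :=
      (fderiv_slice hΦ _ x z).symm
    rw [h1]
    have h2 : (fun y => Φ (y, z)) = fun y => z^K * f (scaleL s z y) := rfl
    rw [h2]
    have hdf : DifferentiableAt ℂ (fun y => f (scaleL s z y)) x :=
      ((hf (scaleL s z x) (Set.mem_univ _)).differentiableAt).comp x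
        (scaleL s z).differentiableAt
    rw [fderiv_const_mul hdf, ContinuousLinearMap.smul_apply, smul_eq_mul]
    have hcomp := ((hf (scaleL s z x) (Set.mem_univ _)).differentiableAt.hasFDerivAt.comp x
      ((scaleL s z).hasFDerivAt)).fderiv
    rw [Function.comp_def] at hcomp
    rw [hcomp, ContinuousLinearMap.comp_apply]
    have hsingle : scaleL s z (Pi.single σ 1) = z ^ (s σ) • (Pi.single σ 1 : Fin n → ℂ) := by
      rw [scaleL_apply]
      funext a
      rcases eq_or_ne a σ with rfl | hne
      · simp
      · simp [Pi.single_eq_of_ne hne]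
    rw [hsingle, map_smul, smul_eq_mul, pow_add]
    show z ^ K * (z ^ s σ * fderiv ℂ f (scaleL s z x) (Pi.single σ 1)) = _
    rw [pderivC]
    ring
  set Ψ := POp (Pi.single σ 1) Φ with hΨdef
  have hΨan : AnalyticOnNhd ℂ Ψ Set.univ := an_POp hΦ _
  have hΨslice : Differentiable ℂ (fun z => Ψ (x, z)) := diff_slice' hΨan x
  have hvanΨ : ∀ e, e < k0 → iteratedDeriv e (fun z => Ψ (x, z)) 0 = 0 := by
    intro e he
    rw [slice_iteratedDeriv hΨan e x 0, ← POp_DOp_iter_comm hΦ _ e (x,0)]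
    show fderiv ℂ (DOp^[e] Φ) (x, 0) (Pi.single σ 1, 0) = 0
    rw [← fderiv_slice (an_DOp_iter hΦ e) (Pi.single σ 1) x 0]
    have hzero : (fun y => DOp^[e] Φ (y, 0)) = fun _ => (0:ℂ) := funext fun y => hvan e he y
    rw [hzero]
    simp
  have hvalΨ : iteratedDeriv k0 (fun z => Ψ (x, z)) 0
      = (Nat.factorial k0 : ℂ) * pderivC (c 0) σ x := by
    rw [slice_iteratedDeriv hΨan k0 x 0, ← POp_DOp_iter_comm hΦ _ k0 (x,0)]
    show fderiv ℂ (DOp^[k0] Φ) (x, 0) (Pi.single σ 1, 0) = _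
    rw [hB]
    field_simp
  have hT := tendsto_of_iteratedDeriv_eq_zero _ hΨslice k0 hvanΨ
  rw [hvalΨ] at hT
  have hval2 : (Nat.factorial k0:ℂ)⁻¹ * ((Nat.factorial k0:ℂ) * pderivC (c 0) σ x)
      = pderivC (c 0) σ x := by field_simp
  rw [hval2] at hT
  refine Tendsto.congr' ?_ hT
  filter_upwards [self_mem_nhdsWithin] with ρ (hρ : 0 < ρ)
  have hρne : ((ρ:ℂ)) ≠ 0 := by
    simp only [ne_eq, Complex.ofReal_eq_zero]; exact ne_of_gt hρ
  show (ρ:ℂ)^(-(k0:ℤ)) * Ψ (x, (ρ:ℂ))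
      = (ρ:ℂ)^((K:ℤ) + (s σ : ℤ) - (k0:ℤ)) * pderivC f σ (wsc s ρ x)
  rw [hPOp (ρ:ℂ), ← wsc_eq, ← mul_assoc]
  congr 1
  rw [← zpow_natCast (ρ:ℂ) (K + s σ), ← zpow_add₀ hρne]
  congr 1
  push_cast
  ring

end QHX

open Filter Topology Metric

/-- **Lemma 4.** If `g` is positively semi-quasihomogeneous with
quasi-homogeneous part `gm` of degree `m > 1`, and `T = T_l + T_{l+1} + ⋯` is an analytic
tensor invariant of `ẋ = g(x)` with `T_{l+d}` quasi-homogeneous of degree `l + d` and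
`T_l ≢ 0`, then `T_l` is a quasi-homogeneous tensor invariant of the truncated system
`ẋ = gm(x)`, i.e. `L_{gm} T_l = 0`. -/
theorem lowest_QH_part_invariant_of_truncation {n p q : ℕ}
    (s : Fin n → ℕ) (hs : ∀ a, 0 < s a) (m : ℕ) (hm : 1 < m)
    (g gm : Fin n → (Fin n → ℂ) → ℂ)
    (hgan : ∀ j, AnalyticOnNhd ℂ (g j) Set.univ)
    (hsemi : IsPosSemiQH s m gm g)
    (T : (Fin p → Fin n) → (Fin q → Fin n) → (Fin n → ℂ) → ℂ)
    (hTan : ∀ i j, AnalyticOnNhd ℂ (T i j) Set.univ)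
    (hinv : ∀ i j x, lieDeriv g T i j x = 0)
    (l : ℤ)
    (Tfam : ℕ → (Fin p → Fin n) → (Fin q → Fin n) → (Fin n → ℂ) → ℂ)
    (hfam : ∀ d : ℕ, IsQHTF s (l + (d : ℤ)) (Tfam d))
    (hlow : ∃ i j x, Tfam 0 i j x ≠ 0)
    (hrep : ∀ i j x, HasSum (fun d => Tfam d i j x) (T i j x)) :
    ∀ i j x, lieDeriv gm (Tfam 0) i j x = 0 := by
  intro i j x
  classical
  obtain ⟨hgmQH, hh, hhQH, hhSum⟩ := hsemi
  set kk : (Fin p → Fin n) → (Fin q → Fin n) → ℤ :=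
    fun i' j' => l - ∑ a, (s (j' a) : ℤ) + ∑ b, (s (i' b) : ℤ) with hkkdef
  -- series hypothesis for the tensor components
  have hypT : ∀ (i' : Fin p → Fin n) (j' : Fin q → Fin n) (x' : Fin n → ℂ) (ρ : ℝ),
      0 < ρ → ρ < 1 →
      HasSum (fun d => (ρ:ℂ)^((kk i' j').toNat + d) * Tfam d i' j' x')
        ((ρ:ℂ)^((-(kk i' j')).toNat) * T i' j' (wsc s ρ x')) := by
    intro i' j' x' ρ h0 h1
    have hρne : ((ρ:ℂ)) ≠ 0 := by
      simp only [ne_eq, Complex.ofReal_eq_zero]; exact ne_of_gt h0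
    have base := hrep i' j' (wsc s ρ x')
    have hterm : ∀ d : ℕ, Tfam d i' j' (wsc s ρ x')
        = (ρ:ℂ)^(kk i' j' + (d:ℤ)) * Tfam d i' j' x' := by
      intro d
      rw [hfam d ρ h0 i' j' x']
      congr 2
      simp only [hkkdef]
      ring
    rw [show (fun d : ℕ => Tfam d i' j' (wsc s ρ x'))
        = fun d : ℕ => (ρ:ℂ)^(kk i' j' + (d:ℤ)) * Tfam d i' j' x' from funext hterm] at base
    have base2 := base.mul_left ((ρ:ℂ)^((-(kk i' j')).toNat))
    refine base2.congr_fun fun d => ?_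
    rw [← mul_assoc]
    congr 1
    rw [← zpow_natCast (ρ:ℂ) ((kk i' j').toNat + d), ← zpow_natCast (ρ:ℂ) ((-(kk i' j')).toNat),
      ← zpow_add₀ hρne]
    congr 1
    push_cast
    omega
  -- series hypothesis for the vector field components
  set cg : Fin n → ℕ → (Fin n → ℂ) → ℂ :=
    fun k' d => match d with
      | 0 => gm k'
      | (e+1) => hh e k' with hcgdef
  have hypG : ∀ (k' : Fin n) (x' : Fin n → ℂ) (ρ : ℝ), 0 < ρ → ρ < 1 →
      HasSum (fun d => (ρ:ℂ)^((s k' + m - 1) + d) * cg k' d x')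
        ((ρ:ℂ)^(0:ℕ) * g k' (wsc s ρ x')) := by
    intro k' x' ρ h0 h1
    have base := hhSum k' (wsc s ρ x')
    have hterm : ∀ d : ℕ, hh d k' (wsc s ρ x')
        = (ρ:ℂ)^((s k' + m - 1) + (d+1)) * hh d k' x' := by
      intro d
      rw [hhQH d ρ h0 x' k']
      congr 2
      omega
    rw [show (fun d => hh d k' (wsc s ρ x'))
        = fun d => (ρ:ℂ)^((s k' + m - 1) + (d+1)) * hh d k' x' from funext hterm] at base
    have base2 := (hasSum_nat_add_iff
      (f := fun d => (ρ:ℂ)^((s k' + m - 1) + d) * cg k' d x') 1).1 base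
    rw [Finset.sum_range_one] at base2
    have hval : g k' (wsc s ρ x') - gm k' (wsc s ρ x')
        + (ρ:ℂ)^((s k' + m - 1) + 0) * cg k' 0 x' = (ρ:ℂ)^(0:ℕ) * g k' (wsc s ρ x') := by
      show g k' (wsc s ρ x') - gm k' (wsc s ρ x')
        + (ρ:ℂ)^((s k' + m - 1) + 0) * gm k' x' = (ρ:ℂ)^(0:ℕ) * g k' (wsc s ρ x')
      rw [hgmQH ρ h0 x' k', pow_zero, one_mul, Nat.add_zero]
      ring
    rw [hval] at base2
    exact base2
  have masterT : ∀ (i' : Fin p → Fin n) (j' : Fin q → Fin n), _ :=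
    fun i' j' => QHX.master s (T i' j') (hTan i' j') ((-(kk i' j')).toNat) ((kk i' j').toNat)
      (fun d => Tfam d i' j') (fun x' ρ h0 h1 => hypT i' j' x' ρ h0 h1)
  have masterG : ∀ (k' : Fin n), _ :=
    fun k' => QHX.master s (g k') (hgan k') 0 (s k' + m - 1) (cg k')
      (fun x' ρ h0 h1 => hypG k' x' ρ h0 h1)
  -- sums over updated index tuples
  have hkupdj : ∀ (a : Fin q) (k' : Fin n),
      kk i (Function.update j a k') = kk i j + (s (j a) : ℤ) - (s k' : ℤ) := by
    intro a k'
    simp only [hkkdef]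
    have h2 : ∀ a', (s (Function.update j a k' a') : ℤ)
        = Function.update (fun a' => (s (j a') : ℤ)) a ((s k' : ℤ)) a' := by
      intro a'
      rcases eq_or_ne a' a with rfl | hne
      · simp
      · simp [Function.update_of_ne hne]
    rw [Finset.sum_congr rfl fun a' _ => h2 a',
      Finset.sum_update_of_mem (Finset.mem_univ a),
      Finset.sum_sdiff_eq_sub (Finset.singleton_subset_iff.2 (Finset.mem_univ a)),
      Finset.sum_singleton]
    ring
  have hkupdi : ∀ (b : Fin p) (l' : Fin n),
      kk (Function.update i b l') j = kk i j - (s (i b) : ℤ) + (s l' : ℤ) := by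
    intro b l'
    simp only [hkkdef]
    have h2 : ∀ b', (s (Function.update i b l' b') : ℤ)
        = Function.update (fun b' => (s (i b') : ℤ)) b ((s l' : ℤ)) b' := by
      intro b'
      rcases eq_or_ne b' b with rfl | hne
      · simp
      · simp [Function.update_of_ne hne]
    rw [Finset.sum_congr rfl fun b' _ => h2 b',
      Finset.sum_update_of_mem (Finset.mem_univ b),
      Finset.sum_sdiff_eq_sub (Finset.singleton_subset_iff.2 (Finset.mem_univ b)),
      Finset.sum_singleton]
    ring
  set D : ℤ := kk i j + (m:ℤ) - 1 with hDdef
  set G : ℝ → ℂ := fun ρ =>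
    (∑ σ, ((ρ:ℂ)^(((0:ℕ):ℤ) - ((s σ + m - 1 : ℕ):ℤ)) * g σ (wsc s ρ x))
      * ((ρ:ℂ)^((((-(kk i j)).toNat : ℕ):ℤ) + (s σ:ℤ) - (((kk i j).toNat : ℕ):ℤ))
        * pderivC (T i j) σ (wsc s ρ x)))
    + (∑ a : Fin q, ∑ k',
        ((ρ:ℂ)^((((-(kk i (Function.update j a k'))).toNat : ℕ):ℤ)
            - (((kk i (Function.update j a k')).toNat : ℕ):ℤ))
          * T i (Function.update j a k') (wsc s ρ x))
        * ((ρ:ℂ)^(((0:ℕ):ℤ) + (s (j a):ℤ) - ((s k' + m - 1 : ℕ):ℤ))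
          * pderivC (g k') (j a) (wsc s ρ x)))
    - ∑ b : Fin p, ∑ l',
        ((ρ:ℂ)^((((-(kk (Function.update i b l') j)).toNat : ℕ):ℤ)
            - (((kk (Function.update i b l') j).toNat : ℕ):ℤ))
          * T (Function.update i b l') j (wsc s ρ x))
        * ((ρ:ℂ)^(((0:ℕ):ℤ) + (s l':ℤ) - ((s (i b) + m - 1 : ℕ):ℤ))
          * pderivC (g (i b)) l' (wsc s ρ x)) with hGdef
  have HT : Filter.Tendsto G (nhdsWithin (0:ℝ) (Set.Ioi 0))
      (nhds ((∑ σ, gm σ x * pderivC (Tfam 0 i j) σ x)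
      + (∑ a : Fin q, ∑ k', Tfam 0 i (Function.update j a k') x * pderivC (gm k') (j a) x)
      - ∑ b : Fin p, ∑ l', Tfam 0 (Function.update i b l') j x * pderivC (gm (i b)) l' x)) := by
    rw [hGdef]
    apply Filter.Tendsto.sub
    · apply Filter.Tendsto.add
      · apply tendsto_finset_sum
        intro σ _
        exact ((masterG σ).1 x).mul ((masterT i j).2 σ x)
      · apply tendsto_finset_sum
        intro a _
        apply tendsto_finset_sum
        intro k' _
        exact ((masterT i (Function.update j a k')).1 x).mul ((masterG k').2 (j a) x)
    · apply tendsto_finset_sum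
      intro b _
      apply tendsto_finset_sum
      intro l' _
      exact ((masterT (Function.update i b l') j).1 x).mul ((masterG (i b)).2 l' x)
  have hG0 : ∀ᶠ ρ : ℝ in nhdsWithin (0:ℝ) (Set.Ioi 0), G ρ = 0 := by
    filter_upwards [self_mem_nhdsWithin] with ρ (hρ : 0 < ρ)
    have hρne : ((ρ:ℂ)) ≠ 0 := by
      simp only [ne_eq, Complex.ofReal_eq_zero]; exact ne_of_gt hρ
    have key : ∀ (e1 e2 E : ℤ) (u v : ℂ), e1 + e2 = E →
        ((ρ:ℂ)^e1 * u) * ((ρ:ℂ)^e2 * v) = (ρ:ℂ)^E * (u * v) := by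
      intro e1 e2 E u v hE
      rw [← hE, zpow_add₀ hρne]
      ring
    rw [hGdef]
    beta_reduce
    have t1 : (∑ σ, ((ρ:ℂ)^(((0:ℕ):ℤ) - ((s σ + m - 1 : ℕ):ℤ)) * g σ (wsc s ρ x))
        * ((ρ:ℂ)^((((-(kk i j)).toNat : ℕ):ℤ) + (s σ:ℤ) - (((kk i j).toNat : ℕ):ℤ))
          * pderivC (T i j) σ (wsc s ρ x)))
        = (ρ:ℂ)^(-D) * ∑ σ, g σ (wsc s ρ x) * pderivC (T i j) σ (wsc s ρ x) := by
      rw [Finset.mul_sum]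
      refine Finset.sum_congr rfl fun σ _ => ?_
      apply key
      omega
    have t2 : (∑ a : Fin q, ∑ k',
        ((ρ:ℂ)^((((-(kk i (Function.update j a k'))).toNat : ℕ):ℤ)
            - (((kk i (Function.update j a k')).toNat : ℕ):ℤ))
          * T i (Function.update j a k') (wsc s ρ x))
        * ((ρ:ℂ)^(((0:ℕ):ℤ) + (s (j a):ℤ) - ((s k' + m - 1 : ℕ):ℤ))
          * pderivC (g k') (j a) (wsc s ρ x)))
        = (ρ:ℂ)^(-D) * ∑ a : Fin q, ∑ k',
          T i (Function.update j a k') (wsc s ρ x) * pderivC (g k') (j a) (wsc s ρ x) := by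
      rw [Finset.mul_sum]
      refine Finset.sum_congr rfl fun a _ => ?_
      rw [Finset.mul_sum]
      refine Finset.sum_congr rfl fun k' _ => ?_
      apply key
      have hrel := hkupdj a k'
      omega
    have t3 : (∑ b : Fin p, ∑ l',
        ((ρ:ℂ)^((((-(kk (Function.update i b l') j)).toNat : ℕ):ℤ)
            - (((kk (Function.update i b l') j).toNat : ℕ):ℤ))
          * T (Function.update i b l') j (wsc s ρ x))
        * ((ρ:ℂ)^(((0:ℕ):ℤ) + (s l':ℤ) - ((s (i b) + m - 1 : ℕ):ℤ))
          * pderivC (g (i b)) l' (wsc s ρ x)))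
        = (ρ:ℂ)^(-D) * ∑ b : Fin p, ∑ l',
          T (Function.update i b l') j (wsc s ρ x) * pderivC (g (i b)) l' (wsc s ρ x) := by
      rw [Finset.mul_sum]
      refine Finset.sum_congr rfl fun b _ => ?_
      rw [Finset.mul_sum]
      refine Finset.sum_congr rfl fun l' _ => ?_
      apply key
      have hrel := hkupdi b l'
      omega
    rw [t1, t2, t3, ← mul_add, ← mul_sub]
    have hz : lieDeriv g T i j (wsc s ρ x) = 0 := hinv i j (wsc s ρ x)
    unfold lieDeriv at hz
    rw [hz, mul_zero]
  have hzero : Filter.Tendsto G (nhdsWithin (0:ℝ) (Set.Ioi 0)) (nhds 0) :=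
    Filter.Tendsto.congr' (Filter.EventuallyEq.symm hG0) tendsto_const_nhds
  have hfinal := tendsto_nhds_unique HT hzero
  unfold lieDeriv
  exact hfinal
end

section
/- Let F(x₁,x₂) = (x₁, √2·x₂) be the vector field of the linear system ẋ₁ = x₁, ẋ₂ = √2·x₂ on ℂ². If T = (T^i_j)_{i,j∈{1,2}} is an analytic tensor field of type (1,1) in a neighbourhood of the origin of ℂ² satisfying (L_F T)^i_j = Σ_s F^s ∂T^i_j/∂x^s + Σ_k T^i_k ∂F^k/∂x^j − Σ_l T^l_j ∂F^i/∂x^l = 0 for all i, j ∈ {1,2}, then there exist constants α, β ∈ ℂ such that T^1_1 ≡ α, T^2_2 ≡ β, and T^1_2 ≡ T^2_1 ≡ 0. -/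
open scoped BigOperators

/-- The vector field of the linear system `ẋ₁ = x₁, ẋ₂ = √2·x₂` on `ℂ²`. -/
noncomputable def Fex : Fin 2 → (Fin 2 → ℂ) → ℂ :=
  ![fun x => x 0, fun x => (Real.sqrt 2 : ℂ) * x 1]

namespace Sqrt2Aux

open Metric Filter Set

/-- The eigenvalues of the linear system. -/
noncomputable def lam : Fin 2 → ℝ := ![1, Real.sqrt 2]

lemma sqrt2_gt_one : 1 < Real.sqrt 2 := by
  nlinarith [Real.sq_sqrt (by norm_num : (0:ℝ) ≤ 2), Real.sqrt_nonneg 2]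

lemma sqrt2_lt_two : Real.sqrt 2 < 2 := by
  nlinarith [Real.sq_sqrt (by norm_num : (0:ℝ) ≤ 2), Real.sqrt_nonneg 2]

lemma one_le_lam (i : Fin 2) : 1 ≤ lam i := by
  fin_cases i
  · simp [lam]
  · simpa [lam] using sqrt2_gt_one.le

lemma Fex_eq (i : Fin 2) (y : Fin 2 → ℂ) : Fex i y = (lam i : ℂ) * y i := by
  fin_cases i <;> simp [Fex, lam]

/-- The (backward) flow of the linear system. -/
noncomputable def flow (x : Fin 2 → ℂ) (t : ℝ) : Fin 2 → ℂ :=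
  fun i => Complex.exp ((lam i : ℂ) * t) * x i

lemma flow_zero (x : Fin 2 → ℂ) : flow x 0 = x := by
  funext i; simp [flow]

lemma flow_hasDerivAt (x : Fin 2 → ℂ) (t : ℝ) :
    HasDerivAt (flow x) (fun i => Fex i (flow x t)) t := by
  rw [hasDerivAt_pi]
  intro i
  have h0 : HasDerivAt (fun s : ℝ => ((s : ℂ))) 1 t := by
    exact Complex.ofRealCLM.hasDerivAt (x := t)
  have h1 : HasDerivAt (fun s : ℝ => ((lam i : ℂ) * s)) ((lam i : ℂ) * 1) t :=
    h0.const_mul _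
  have h2 := (h1.cexp).mul_const (x i)
  refine h2.congr_deriv ?_
  simp only [Fex_eq, flow]
  ring

lemma norm_flow_le (x : Fin 2 → ℂ) {t : ℝ} (ht : t ≤ 0) :
    ‖flow x t‖ ≤ Real.exp t * ‖x‖ := by
  rw [pi_norm_le_iff_of_nonneg (mul_nonneg (Real.exp_nonneg t) (norm_nonneg x))]
  intro i
  have h1 : ‖flow x t i‖ = Real.exp (lam i * t) * ‖x i‖ := by
    have hcast : ((lam i : ℂ) * t) = ((lam i * t : ℝ) : ℂ) := by push_cast; ring
    simp only [flow, norm_mul]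
    congr 1
    rw [hcast, Complex.norm_exp_ofReal]
  rw [h1]
  have h2 : Real.exp (lam i * t) ≤ Real.exp t := by
    apply Real.exp_le_exp.2
    calc lam i * t ≤ 1 * t := mul_le_mul_of_nonpos_right (one_le_lam i) ht
    _ = t := one_mul t
  exact mul_le_mul h2 (norm_le_pi_norm x i) (norm_nonneg _) (Real.exp_nonneg t)

lemma flow_cont (x : Fin 2 → ℂ) : Continuous (fun s : ℝ => flow x s) := by
  apply continuous_pi
  intro i
  exact (Complex.continuous_exp.comp (continuous_const.mul Complex.continuous_ofReal)).mul
    continuous_const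

/-- Key lemma: an analytic function satisfying `E f = c f` with `c < 1` and `f 0 = 0`
vanishes on a ball around 0 contained in `U`. -/
lemma key {U : Set (Fin 2 → ℂ)} {f : (Fin 2 → ℂ) → ℂ}
    (hf : AnalyticOnNhd ℂ f U) {r : ℝ}
    (hball : Metric.ball (0 : Fin 2 → ℂ) r ⊆ U) {c : ℝ} (hc : c < 1) (hf0 : f 0 = 0)
    (hpde : ∀ x ∈ Metric.ball (0 : Fin 2 → ℂ) r,
      fderiv ℂ f x (fun s => Fex s x) = (c : ℂ) * f x) :
    ∀ x ∈ Metric.ball (0 : Fin 2 → ℂ) r, f x = 0 := by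
  intro x hx
  have hxr : ‖x‖ < r := by simpa [dist_zero_right] using mem_ball.mp hx
  have hr : 0 < r := lt_of_le_of_lt (norm_nonneg x) hxr
  have h0b : (0 : Fin 2 → ℂ) ∈ Metric.ball (0 : Fin 2 → ℂ) r := mem_ball_self hr
  -- big-O bound near 0
  obtain ⟨C₀, hC₀⟩ := ((hf 0 (hball h0b)).differentiableAt.isBigO_sub).bound
  have hC₀' : ∀ᶠ y in nhds (0 : Fin 2 → ℂ), ‖f y‖ ≤ C₀ * ‖y‖ := by
    filter_upwards [hC₀] with y hy
    simpa [hf0] using hy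
  obtain ⟨δ, hδpos, hδ⟩ := Metric.eventually_nhds_iff.mp hC₀'
  set C : ℝ := max C₀ 0 with hCdef
  have hCnn : 0 ≤ C := le_max_right _ _
  have hbound : ∀ y : Fin 2 → ℂ, dist y 0 < δ → ‖f y‖ ≤ C * ‖y‖ := by
    intro y hy
    exact le_trans (hδ hy) (mul_le_mul_of_nonneg_right (le_max_left _ _) (norm_nonneg y))
  -- flow stays in the ball for t ≤ 0
  have hmem : ∀ t : ℝ, t ≤ 0 → flow x t ∈ Metric.ball (0 : Fin 2 → ℂ) r := by
    intro t ht
    rw [mem_ball, dist_zero_right]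
    calc ‖flow x t‖ ≤ Real.exp t * ‖x‖ := norm_flow_le x ht
    _ ≤ 1 * ‖x‖ := by
        exact mul_le_mul_of_nonneg_right (Real.exp_le_one_iff.mpr ht) (norm_nonneg x)
    _ = ‖x‖ := one_mul _
    _ < r := hxr
  -- step A: f x = exp(-c t) * f (flow x t)
  have hA : ∀ t : ℝ, t ≤ 0 → f x = Complex.exp (-(c : ℂ) * t) * f (flow x t) := by
    intro t ht
    set g : ℝ → ℂ := fun s => Complex.exp (-(c : ℂ) * s) * f (flow x s) with hg
    have hderiv : ∀ s : ℝ, s ≤ 0 → HasDerivAt g 0 s := by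
      intro s hs
      have hms := hmem s hs
      have hfd : HasFDerivAt f (fderiv ℂ f (flow x s)) (flow x s) :=
        (hf _ (hball hms)).differentiableAt.hasFDerivAt
      have h1 : HasDerivAt (fun u : ℝ => f (flow x u))
          (fderiv ℂ f (flow x s) (fun i => Fex i (flow x s))) s := by
        exact (hfd.restrictScalars ℝ).comp_hasDerivAt s (flow_hasDerivAt x s)
      rw [hpde _ hms] at h1
      have h0 : HasDerivAt (fun u : ℝ => ((u : ℂ))) 1 s := by
        exact Complex.ofRealCLM.hasDerivAt (x := s)
      have h2 : HasDerivAt (fun u : ℝ => Complex.exp (-(c : ℂ) * u))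
          (Complex.exp (-(c : ℂ) * s) * (-(c : ℂ) * 1)) s := (h0.const_mul _).cexp
      have h3 := h2.mul h1
      refine h3.congr_deriv ?_
      ring
    have hcont : ContinuousOn g (Set.Icc t 0) := by
      apply ContinuousOn.mul
      · exact (Complex.continuous_exp.comp
          (continuous_const.mul Complex.continuous_ofReal)).continuousOn
      · apply ContinuousOn.comp hf.continuousOn (flow_cont x).continuousOn
        intro s hs
        exact hball (hmem s hs.2)
    have hconst := constant_of_has_deriv_right_zero hcont
      (fun s hs => (hderiv s (le_of_lt hs.2)).hasDerivWithinAt)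
    have h0mem : (0 : ℝ) ∈ Set.Icc t 0 := Set.right_mem_Icc.mpr ht
    have := hconst 0 h0mem
    -- this : g 0 = g t
    rw [hg] at this
    simp only [Complex.ofReal_zero, mul_zero, Complex.exp_zero, one_mul, flow_zero] at this
    exact this
  -- step B: take t → -∞
  have hnorm : ∀ t : ℝ, t ≤ 0 → Real.exp t * ‖x‖ < δ →
      ‖f x‖ ≤ C * Real.exp ((1 - c) * t) * ‖x‖ := by
    intro t ht htδ
    have h1 : ‖f x‖ = Real.exp (-(c * t)) * ‖f (flow x t)‖ := by
      rw [hA t ht, norm_mul]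
      congr 1
      have : (-(c : ℂ) * t) = ((-(c * t) : ℝ) : ℂ) := by push_cast; ring
      rw [this, Complex.norm_exp_ofReal]
    have h2 : ‖f (flow x t)‖ ≤ C * (Real.exp t * ‖x‖) := by
      have hdist : dist (flow x t) 0 < δ := by
        rw [dist_zero_right]
        exact lt_of_le_of_lt (norm_flow_le x ht) htδ
      exact le_trans (hbound _ hdist)
        (mul_le_mul_of_nonneg_left (norm_flow_le x ht) hCnn)
    calc ‖f x‖ = Real.exp (-(c * t)) * ‖f (flow x t)‖ := h1
    _ ≤ Real.exp (-(c * t)) * (C * (Real.exp t * ‖x‖)) :=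
        mul_le_mul_of_nonneg_left h2 (Real.exp_nonneg _)
    _ = C * (Real.exp (-(c * t)) * Real.exp t) * ‖x‖ := by ring
    _ = C * Real.exp ((1 - c) * t) * ‖x‖ := by rw [← Real.exp_add]; ring_nf
  have htend : Tendsto (fun t : ℝ => C * Real.exp ((1 - c) * t) * ‖x‖) atBot (nhds 0) := by
    have h1 : Tendsto (fun t : ℝ => (1 - c) * t) atBot atBot :=
      Tendsto.const_mul_atBot (by linarith) tendsto_id
    have h2 : Tendsto (fun t : ℝ => Real.exp ((1 - c) * t)) atBot (nhds 0) :=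
      Real.tendsto_exp_atBot.comp h1
    have := (h2.const_mul C).mul_const ‖x‖
    simpa using this
  have hev : ∀ᶠ t : ℝ in atBot, ‖f x‖ ≤ C * Real.exp ((1 - c) * t) * ‖x‖ := by
    have h1 : Tendsto (fun t : ℝ => Real.exp t * ‖x‖) atBot (nhds 0) := by
      simpa using Real.tendsto_exp_atBot.mul_const ‖x‖
    filter_upwards [h1.eventually_lt_const hδpos, eventually_le_atBot (0 : ℝ)] with t h1t h2t
    exact hnorm t h2t h1t
  have hle : ‖f x‖ ≤ 0 := ge_of_tendsto htend hev
  simpa using le_antisymm hle (norm_nonneg _)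

lemma sum_mul_pderivC (f : (Fin 2 → ℂ) → ℂ) (v : Fin 2 → ℂ) (x : Fin 2 → ℂ) :
    ∑ s, v s * pderivC f s x = fderiv ℂ f x v := by
  have hv : v = ∑ s, v s • (Pi.single s 1 : Fin 2 → ℂ) := by
    funext j
    simp [Pi.single_apply]
  conv_rhs => rw [hv]
  rw [map_sum]
  simp [pderivC, smul_eq_mul]

lemma pderivC_proj (i s : Fin 2) (x : Fin 2 → ℂ) :
    pderivC (fun y : Fin 2 → ℂ => y i) s x = (Pi.single s 1 : Fin 2 → ℂ) i := by
  have h : fderiv ℂ (fun y : Fin 2 → ℂ => y i) x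
      = (ContinuousLinearMap.proj i : (Fin 2 → ℂ) →L[ℂ] ℂ) :=
    (ContinuousLinearMap.proj i : (Fin 2 → ℂ) →L[ℂ] ℂ).hasFDerivAt.fderiv
  rw [pderivC, h]
  rfl

lemma pderivC_Fex0 (s : Fin 2) (x : Fin 2 → ℂ) :
    pderivC (Fex 0) s x = (Pi.single s 1 : Fin 2 → ℂ) 0 := by
  have hE : Fex 0 = fun y : Fin 2 → ℂ => y 0 := rfl
  rw [hE, pderivC_proj]

lemma pderivC_Fex1 (s : Fin 2) (x : Fin 2 → ℂ) :
    pderivC (Fex 1) s x = (Real.sqrt 2 : ℂ) * (Pi.single s 1 : Fin 2 → ℂ) 1 := by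
  have hE : Fex 1 = fun y : Fin 2 → ℂ => (Real.sqrt 2 : ℂ) * y 1 := rfl
  have h2 : fderiv ℂ (Fex 1) x = (Real.sqrt 2 : ℂ) •
      (ContinuousLinearMap.proj 1 : (Fin 2 → ℂ) →L[ℂ] ℂ) := by
    rw [hE]
    exact ((ContinuousLinearMap.proj (1 : Fin 2) : (Fin 2 → ℂ) →L[ℂ] ℂ).hasFDerivAt.const_mul
      (Real.sqrt 2 : ℂ)).fderiv
  rw [pderivC, h2]
  rfl

end Sqrt2Aux

open Sqrt2Aux Metric Filter Set in
/-- Any analytic tensor invariant of type `(1,1)` of the system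
`ẋ₁ = x₁, ẋ₂ = √2·x₂` near the origin of `ℂ²` is diagonal with constant entries. -/
theorem one_one_invariant_of_sqrt2_system
    (U : Set (Fin 2 → ℂ)) (hU : IsOpen U) (hUconn : IsPreconnected U)
    (h0 : (0 : Fin 2 → ℂ) ∈ U)
    (T : Fin 2 → Fin 2 → (Fin 2 → ℂ) → ℂ)
    (hTan : ∀ i j, AnalyticOnNhd ℂ (T i j) U)
    (hinv : ∀ (i j : Fin 2), ∀ x ∈ U,
      (∑ t, Fex t x * pderivC (T i j) t x)
        + (∑ k, T i k x * pderivC (Fex k) j x)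
        - ∑ t, T t j x * pderivC (Fex i) t x = 0) :
    ∃ α β : ℂ, ∀ x ∈ U,
      T 0 0 x = α ∧ T 1 1 x = β ∧ T 0 1 x = 0 ∧ T 1 0 x = 0 := by
  obtain ⟨r, hr, hball⟩ := Metric.isOpen_iff.mp hU 0 h0
  -- the PDE for each component
  have hPDE : ∀ i j : Fin 2, ∀ x ∈ U,
      fderiv ℂ (T i j) x (fun s => Fex s x) = ((lam i - lam j : ℝ) : ℂ) * T i j x := by
    intro i j x hx
    have h := hinv i j x hx
    rw [sum_mul_pderivC (T i j) (fun s => Fex s x) x] at h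
    have h2 : ∑ k, T i k x * pderivC (Fex k) j x = (lam j : ℂ) * T i j x := by
      rw [Fin.sum_univ_two, pderivC_Fex0, pderivC_Fex1]
      rcases (by omega : j = 0 ∨ j = 1) with rfl | rfl <;>
        simp [lam, Pi.single_apply, mul_comm, mul_assoc]
    have h3 : ∑ t, T t j x * pderivC (Fex i) t x = (lam i : ℂ) * T i j x := by
      rcases (by omega : i = 0 ∨ i = 1) with rfl | rfl
      · rw [Fin.sum_univ_two, pderivC_Fex0, pderivC_Fex0]
        simp [lam, Pi.single_apply]
      · rw [Fin.sum_univ_two, pderivC_Fex1, pderivC_Fex1]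
        simp [lam, Pi.single_apply, mul_comm, mul_assoc]
    rw [h2, h3] at h
    push_cast
    linear_combination h
  have hFex0 : (fun s => Fex s (0 : Fin 2 → ℂ)) = 0 := by
    funext s
    fin_cases s <;> simp [Fex]
  -- off-diagonal components vanish at 0
  have hzero : ∀ i j : Fin 2, i ≠ j → ∀ x ∈ U, T i j x = 0 := by
    intro i j hij
    have hcne : lam i - lam j ≠ 0 := by
      rw [sub_ne_zero]
      rcases (by omega : i = 0 ∨ i = 1) with rfl | rfl <;>
          rcases (by omega : j = 0 ∨ j = 1) with rfl | rfl
      · exact absurd rfl hij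
      · simpa [lam] using ne_of_lt sqrt2_gt_one
      · simpa [lam] using ne_of_gt sqrt2_gt_one
      · exact absurd rfl hij
    have hclt : lam i - lam j < 1 := by
      rcases (by omega : i = 0 ∨ i = 1) with rfl | rfl <;>
          rcases (by omega : j = 0 ∨ j = 1) with rfl | rfl <;>
        simp [lam] <;> nlinarith [sqrt2_gt_one, sqrt2_lt_two]
    have hT0 : T i j 0 = 0 := by
      have h := hPDE i j 0 h0
      rw [hFex0] at h
      simp only [map_zero] at h
      have hne : ((lam i - lam j : ℝ) : ℂ) ≠ 0 := Complex.ofReal_ne_zero.mpr hcne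
      exact (mul_eq_zero.mp h.symm).resolve_left hne
    have hkey := key (hTan i j) hball hclt hT0 (fun x hx => hPDE i j x (hball hx))
    have hev : T i j =ᶠ[nhds (0 : Fin 2 → ℂ)] 0 :=
      Filter.eventuallyEq_of_mem (Metric.ball_mem_nhds 0 hr) hkey
    exact fun x hx =>
      (hTan i j).eqOn_zero_of_preconnected_of_eventuallyEq_zero hUconn h0 hev hx
  -- diagonal components are constant
  have hconst : ∀ i : Fin 2, ∀ x ∈ U, T i i x = T i i 0 := by
    intro i
    set f : (Fin 2 → ℂ) → ℂ := fun y => T i i y - T i i 0 with hf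
    have hfan : AnalyticOnNhd ℂ f U := (hTan i i).sub analyticOnNhd_const
    have hfpde : ∀ x ∈ Metric.ball (0 : Fin 2 → ℂ) r,
        fderiv ℂ f x (fun s => Fex s x) = ((0 : ℝ) : ℂ) * f x := by
      intro x hx
      have h1 : fderiv ℂ f x = fderiv ℂ (T i i) x := fderiv_sub_const _
      rw [h1]
      have h2 := hPDE i i x (hball hx)
      simpa using h2
    have hf0 : f 0 = 0 := by simp [hf]
    have hkey := key hfan hball (by norm_num) hf0 hfpde
    have hev : T i i =ᶠ[nhds (0 : Fin 2 → ℂ)] (fun _ => T i i 0) := by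
      apply Filter.eventuallyEq_of_mem (Metric.ball_mem_nhds 0 hr)
      intro y hy
      have := hkey y hy
      simp only [hf] at this
      exact sub_eq_zero.mp this
    have heq := (hTan i i).eqOn_of_preconnected_of_eventuallyEq analyticOnNhd_const hUconn h0 hev
    exact fun x hx => heq hx
  exact ⟨T 0 0 0, T 1 1 0, fun x hx =>
    ⟨hconst 0 x hx, hconst 1 x hx, hzero 0 1 (by decide) x hx, hzero 1 0 (by decide) x hx⟩⟩
end

section
/- Let F(x₁,x₂) = (x₁, √2·x₂) be the vector field of the linear system ẋ₁ = x₁, ẋ₂ = √2·x₂ on ℂ², and let p, q be nonnegative integers with q > p. Then every analytic tensor invariant T of type (p,q) of this system in a neighbourhood of the origin is identically zero. -/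
open scoped BigOperators

/-! ### Auxiliary development -/

open Filter Topology

/-- The Euler-type operator `x₀ ∂₀ + √2 x₁ ∂₁`. -/
noncomputable def EulerOp (f : (Fin 2 → ℂ) → ℂ) (x : Fin 2 → ℂ) : ℂ :=
  x 0 * pderivC f 0 x + (Real.sqrt 2 : ℂ) * x 1 * pderivC f 1 x

/-- Eigenvalues of the linearization. -/
noncomputable def lamC : Fin 2 → ℂ := ![1, (Real.sqrt 2 : ℂ)]

/-- Iterated partial derivatives indexed by a list of directions. -/
noncomputable def PD : List (Fin 2) → ((Fin 2 → ℂ) → ℂ) → ((Fin 2 → ℂ) → ℂ)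
  | [], f => f
  | k :: L, f => fun x => pderivC (PD L f) k x

lemma AnalyticOnNhd.pderivC' {U : Set (Fin 2 → ℂ)} {f : (Fin 2 → ℂ) → ℂ}
    (hf : AnalyticOnNhd ℂ f U) (k : Fin 2) :
    AnalyticOnNhd ℂ (fun x => pderivC f k x) U := fun x hx => by
  have := ((ContinuousLinearMap.apply ℂ ℂ (Pi.single k (1:ℂ))).analyticAt
    (fderiv ℂ f x)).comp ((hf.fderiv) x hx)
  exact this.congr (Filter.Eventually.of_forall fun y => rfl)

lemma PD_analytic {U : Set (Fin 2 → ℂ)} {f : (Fin 2 → ℂ) → ℂ}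
    (hf : AnalyticOnNhd ℂ f U) : ∀ L : List (Fin 2), AnalyticOnNhd ℂ (PD L f) U
  | [] => hf
  | k :: L => (PD_analytic hf L).pderivC' k

lemma pderiv_comm {U : Set (Fin 2 → ℂ)} {f : (Fin 2 → ℂ) → ℂ}
    (hU : IsOpen U) (hf : AnalyticOnNhd ℂ f U) {x : Fin 2 → ℂ} (hx : x ∈ U) (k m : Fin 2) :
    pderivC (fun y => pderivC f m y) k x = pderivC (fun y => pderivC f k y) m x := by
  have hdiff : DifferentiableAt ℂ (fderiv ℂ f) x := ((hf.fderiv) x hx).differentiableAt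
  have h1 : ∀ᶠ y in 𝓝 x, HasFDerivAt f (fderiv ℂ f y) y := by
    filter_upwards [hU.eventually_mem hx] with y hy
    exact ((hf y hy).differentiableAt).hasFDerivAt
  have sym := second_derivative_symmetric_of_eventually h1 hdiff.hasFDerivAt
    (Pi.single k (1:ℂ)) (Pi.single m (1:ℂ))
  have e1 : ∀ m k : Fin 2, pderivC (fun y => pderivC f m y) k x
      = fderiv ℂ (fderiv ℂ f) x (Pi.single k 1) (Pi.single m 1) := by
    intro m k
    show fderiv ℂ (fun y => (fderiv ℂ f y) (Pi.single m (1:ℂ))) x (Pi.single k 1) = _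
    rw [fderiv_clm_apply hdiff (differentiableAt_const _)]
    simp
  rw [e1 m k, e1 k m, sym]

lemma euler_pderiv {U : Set (Fin 2 → ℂ)} (hU : IsOpen U) {f : (Fin 2 → ℂ) → ℂ}
    (hf : AnalyticOnNhd ℂ f U) {c : ℂ}
    (heq : ∀ x ∈ U, EulerOp f x = c * f x) (k : Fin 2) :
    ∀ x ∈ U, EulerOp (fun y => pderivC f k y) x = (c - lamC k) * pderivC f k x := by
  intro x hx
  have hg0 := hf.pderivC' 0
  have hg1 := hf.pderivC' 1
  have hgd0 : DifferentiableAt ℂ (fun y => pderivC f 0 y) x := (hg0 x hx).differentiableAt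
  have hgd1 : DifferentiableAt ℂ (fun y => pderivC f 1 y) x := (hg1 x hx).differentiableAt
  have hP0 : HasFDerivAt (fun y : Fin 2 → ℂ => y 0)
      (ContinuousLinearMap.proj 0 : (Fin 2 → ℂ) →L[ℂ] ℂ) x :=
    (ContinuousLinearMap.proj 0 : (Fin 2 → ℂ) →L[ℂ] ℂ).hasFDerivAt
  have hP1 : HasFDerivAt (fun y : Fin 2 → ℂ => y 1)
      (ContinuousLinearMap.proj 1 : (Fin 2 → ℂ) →L[ℂ] ℂ) x :=
    (ContinuousLinearMap.proj 1 : (Fin 2 → ℂ) →L[ℂ] ℂ).hasFDerivAt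
  have HA : HasFDerivAt (fun y : Fin 2 → ℂ => y 0 * pderivC f 0 y)
      (x 0 • fderiv ℂ (fun y => pderivC f 0 y) x
        + pderivC f 0 x • (ContinuousLinearMap.proj 0 : (Fin 2 → ℂ) →L[ℂ] ℂ)) x :=
    hP0.mul hgd0.hasFDerivAt
  have HB : HasFDerivAt (fun y : Fin 2 → ℂ => (Real.sqrt 2 : ℂ) * y 1 * pderivC f 1 y)
      (((Real.sqrt 2 : ℂ) * x 1) • fderiv ℂ (fun y => pderivC f 1 y) x
        + pderivC f 1 x • ((Real.sqrt 2 : ℂ) •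
          (ContinuousLinearMap.proj 1 : (Fin 2 → ℂ) →L[ℂ] ℂ))) x :=
    (hP1.const_mul _).mul hgd1.hasFDerivAt
  have HL : HasFDerivAt (fun y => EulerOp f y)
      ((x 0 • fderiv ℂ (fun y => pderivC f 0 y) x
        + pderivC f 0 x • (ContinuousLinearMap.proj 0 : (Fin 2 → ℂ) →L[ℂ] ℂ))
       + (((Real.sqrt 2 : ℂ) * x 1) • fderiv ℂ (fun y => pderivC f 1 y) x
        + pderivC f 1 x • ((Real.sqrt 2 : ℂ) •
          (ContinuousLinearMap.proj 1 : (Fin 2 → ℂ) →L[ℂ] ℂ)))) x := HA.add HB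
  have HR : HasFDerivAt (fun y => c * f y) (c • fderiv ℂ f x) x :=
    ((hf x hx).differentiableAt).hasFDerivAt.const_mul c
  have hev : (fun y => EulerOp f y) =ᶠ[𝓝 x] fun y => c * f y := by
    filter_upwards [hU.eventually_mem hx] with y hy using heq y hy
  have hfd : fderiv ℂ (fun y => EulerOp f y) x = fderiv ℂ (fun y => c * f y) x :=
    hev.fderiv_eq
  have key := HL.fderiv.symm.trans (hfd.trans HR.fderiv)
  have key2 := congrArg (fun (L : (Fin 2 → ℂ) →L[ℂ] ℂ) => L (Pi.single k 1)) key
  simp only [ContinuousLinearMap.add_apply, ContinuousLinearMap.smul_apply,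
    ContinuousLinearMap.proj_apply, smul_eq_mul] at key2
  -- key2 : x 0 * fderiv g0 x (e k) + g0 x * (e k 0) + (√2 x1 * fderiv g1 x (e k)
  --   + g1 x * (√2 * e k 1)) = c * fderiv f x (e k)
  have c0 : fderiv ℂ (fun y => pderivC f 0 y) x (Pi.single k 1)
      = pderivC (fun y => pderivC f k y) 0 x := pderiv_comm hU hf hx k 0
  have c1 : fderiv ℂ (fun y => pderivC f 1 y) x (Pi.single k 1)
      = pderivC (fun y => pderivC f k y) 1 x := pderiv_comm hU hf hx k 1
  rw [c0, c1] at key2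
  show x 0 * pderivC (fun y => pderivC f k y) 0 x
      + (Real.sqrt 2 : ℂ) * x 1 * pderivC (fun y => pderivC f k y) 1 x
      = (c - lamC k) * pderivC f k x
  simp only [pderivC] at key2 ⊢
  fin_cases k <;>
    norm_num [lamC, Pi.single_apply] at key2 ⊢ <;>
    linear_combination key2

/-- Sum of eigenvalues along a list. -/
noncomputable def lamSum (L : List (Fin 2)) : ℂ := (L.map lamC).sum

lemma lamSum_cons (k : Fin 2) (L : List (Fin 2)) : lamSum (k :: L) = lamC k + lamSum L := by
  simp [lamSum]

lemma lamSum_exists (L : List (Fin 2)) :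
    ∃ a0 a1 : ℕ, lamSum L = (a0 : ℂ) + (Real.sqrt 2 : ℂ) * a1 := by
  induction L with
  | nil => exact ⟨0, 0, by simp [lamSum]⟩
  | cons k L ih =>
    obtain ⟨a0, a1, h⟩ := ih
    fin_cases k
    · exact ⟨a0 + 1, a1, by rw [lamSum_cons, h]; push_cast [lamC, Matrix.cons_val_zero]; ring⟩
    · exact ⟨a0, a1 + 1, by rw [lamSum_cons, h]; push_cast [lamC, Matrix.cons_val_one, Matrix.head_cons]; ring⟩

lemma euler_PD {U : Set (Fin 2 → ℂ)} (hU : IsOpen U) {f : (Fin 2 → ℂ) → ℂ}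
    (hf : AnalyticOnNhd ℂ f U) {c : ℂ}
    (heq : ∀ x ∈ U, EulerOp f x = c * f x) :
    ∀ L : List (Fin 2), ∀ x ∈ U, EulerOp (PD L f) x = (c - lamSum L) * PD L f x := by
  intro L
  induction L with
  | nil => simpa [PD, lamSum] using heq
  | cons k L ih =>
    have h' := euler_pderiv hU (PD_analytic hf L) ih k
    intro x hx
    have := h' x hx
    rw [lamSum_cons]
    show EulerOp (fun y => pderivC (PD L f) k y) x
      = (c - (lamC k + lamSum L)) * pderivC (PD L f) k x
    rw [this]; ring

lemma EulerOp_zero (f : (Fin 2 → ℂ) → ℂ) : EulerOp f 0 = 0 := by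
  simp [EulerOp]

lemma PD_zero_eq_zero {U : Set (Fin 2 → ℂ)} (hU : IsOpen U) {f : (Fin 2 → ℂ) → ℂ}
    (hf : AnalyticOnNhd ℂ f U) {c : ℂ} (h0 : (0 : Fin 2 → ℂ) ∈ U)
    (heq : ∀ x ∈ U, EulerOp f x = c * f x)
    (hc : ∀ L : List (Fin 2), c ≠ lamSum L) :
    ∀ L : List (Fin 2), PD L f 0 = 0 := by
  intro L
  have := euler_PD hU hf heq L 0 h0
  rw [EulerOp_zero] at this
  have hne : c - lamSum L ≠ 0 := sub_ne_zero.mpr (hc L)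
  exact (mul_eq_zero.mp this.symm).resolve_left hne

lemma IFD_eq_PD {U : Set (Fin 2 → ℂ)} (hU : IsOpen U) {f : (Fin 2 → ℂ) → ℂ}
    (hf : AnalyticOnNhd ℂ f U) :
    ∀ (n : ℕ) (v : Fin n → Fin 2) (x : Fin 2 → ℂ), x ∈ U →
      iteratedFDeriv ℂ n f x (fun s => Pi.single (v s) (1:ℂ)) = PD (List.ofFn v) f x := by
  intro n
  induction n with
  | zero =>
    intro v x hx
    simp [PD, List.ofFn_zero, iteratedFDeriv_zero_apply]
  | succ n ih =>
    intro v x hx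
    set m : Fin (n+1) → (Fin 2 → ℂ) := fun s => Pi.single (v s) (1:ℂ) with hm
    show iteratedFDeriv ℂ (n+1) f x m = _
    rw [iteratedFDeriv_succ_apply_left]
    have htail : Fin.tail m = fun s : Fin n => Pi.single (v s.succ) (1:ℂ) := rfl
    have hm0 : m 0 = Pi.single (v 0) (1:ℂ) := rfl
    rw [htail, hm0]
    have hdiff : DifferentiableAt ℂ (iteratedFDeriv ℂ n f) x :=
      ((hf.iteratedFDeriv n) x hx).differentiableAt
    have step1 := fderiv_continuousMultilinear_apply_const_apply hdiff
      (fun s : Fin n => Pi.single (v s.succ) (1:ℂ)) (Pi.single (v 0) (1:ℂ))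
    rw [← step1]
    have hev : (fun y => iteratedFDeriv ℂ n f y (fun s : Fin n => Pi.single (v s.succ) (1:ℂ)))
        =ᶠ[𝓝 x] PD (List.ofFn (Fin.tail v)) f := by
      filter_upwards [hU.eventually_mem hx] with y hy
      exact ih (Fin.tail v) y hy
    have hfd : fderiv ℂ
        (fun y => iteratedFDeriv ℂ n f y (fun s : Fin n => Pi.single (v s.succ) (1:ℂ))) x
        = fderiv ℂ (PD (List.ofFn (Fin.tail v)) f) x := hev.fderiv_eq
    have h2 : fderiv ℂ
        (fun y => iteratedFDeriv ℂ n f y (fun s : Fin n => Pi.single (v s.succ) (1:ℂ)))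
        x (Pi.single (v 0) (1:ℂ)) = pderivC (PD (List.ofFn (Fin.tail v)) f) (v 0) x := by
      rw [hfd]; rfl
    rw [h2, List.ofFn_succ]
    rfl

lemma master {U : Set (Fin 2 → ℂ)} (hU : IsOpen U) (hUconn : IsPreconnected U)
    (h0 : (0 : Fin 2 → ℂ) ∈ U) {f : (Fin 2 → ℂ) → ℂ} (hf : AnalyticOnNhd ℂ f U) {c : ℂ}
    (hc : ∀ L : List (Fin 2), c ≠ lamSum L)
    (heq : ∀ x ∈ U, EulerOp f x = c * f x) : ∀ x ∈ U, f x = 0 := by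
  have hPD0 := PD_zero_eq_zero hU hf h0 heq hc
  have hIFD : ∀ n : ℕ, iteratedFDeriv ℂ n f 0 = 0 := by
    intro n
    apply ContinuousMultilinearMap.toMultilinearMap_injective
    apply Module.Basis.ext_multilinear (fun _ => Pi.basisFun ℂ (Fin 2))
    intro v
    have hb : (fun i : Fin n => (Pi.basisFun ℂ (Fin 2)) (v i))
        = fun i : Fin n => Pi.single (v i) (1:ℂ) := by
      funext i; simp
    show iteratedFDeriv ℂ n f 0 (fun i => (Pi.basisFun ℂ (Fin 2)) (v i)) = _
    rw [hb, IFD_eq_PD hU hf n v 0 h0, hPD0]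
    rfl
  have hev0 : f =ᶠ[𝓝 (0 : Fin 2 → ℂ)] 0 := by
    obtain ⟨pS, hpS⟩ := hf 0 h0
    obtain ⟨r, hp⟩ := hpS
    have hball : ∀ y ∈ EMetric.ball (0 : Fin 2 → ℂ) r, f y = 0 := by
      intro y hy
      have hs := hp.hasSum_iteratedFDeriv hy
      simp only [hIFD, ContinuousMultilinearMap.zero_apply, smul_zero] at hs
      have := hs.unique hasSum_zero
      simpa using this
    filter_upwards [EMetric.ball_mem_nhds (0 : Fin 2 → ℂ) hp.r_pos] with y hy
    simpa using hball y hy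
  exact fun x hx => hf.eqOn_zero_of_preconnected_of_eventuallyEq_zero hUconn h0 hev0 hx

lemma sum_lamC_exists {β : Type*} [DecidableEq β] (s : Finset β) (g : β → Fin 2) :
    ∃ n0 n1 : ℕ, n0 + n1 = s.card ∧
      (∑ b ∈ s, lamC (g b)) = (n0 : ℂ) + (Real.sqrt 2 : ℂ) * n1 := by
  classical
  induction s using Finset.induction_on with
  | empty => exact ⟨0, 0, by simp⟩
  | @insert a s ha ih =>
    obtain ⟨n0, n1, hcard, hsum⟩ := ih
    obtain h2 | h2 : g a = 0 ∨ g a = 1 := by omega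
    · refine ⟨n0 + 1, n1, ?_, ?_⟩
      · rw [Finset.card_insert_of_notMem ha]; omega
      · rw [Finset.sum_insert ha, hsum, h2]
        push_cast [lamC, Matrix.cons_val_zero]; ring
    · refine ⟨n0, n1 + 1, ?_, ?_⟩
      · rw [Finset.card_insert_of_notMem ha]; omega
      · rw [Finset.sum_insert ha, hsum, h2]
        push_cast [lamC, Matrix.cons_val_one, Matrix.head_cons]; ring

lemma sqrt2_combination_ne {p q : ℕ} (hpq : p < q) (n0 n1 m0 m1 : ℕ)
    (hn : n0 + n1 = p) (hm : m0 + m1 = q) (L : List (Fin 2)) :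
    ((n0 : ℂ) + (Real.sqrt 2 : ℂ) * n1) - ((m0 : ℂ) + (Real.sqrt 2 : ℂ) * m1) ≠ lamSum L := by
  obtain ⟨a0, a1, hL⟩ := lamSum_exists L
  rw [hL]
  intro h
  have h2 : ((n0 : ℂ) + (Real.sqrt 2 : ℂ) * n1)
      = ((a0 : ℂ) + m0) + (Real.sqrt 2 : ℂ) * ((a1 : ℂ) + m1) := by linear_combination h
  have hr : (n0 : ℝ) + Real.sqrt 2 * n1 = ((a0 : ℝ) + m0) + Real.sqrt 2 * ((a1 : ℝ) + m1) := by
    exact_mod_cast h2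
  by_cases hz : (n1 : ℝ) = (a1 : ℝ) + m1
  · have hn1 : n1 = a1 + m1 := by exact_mod_cast hz
    have hn0 : (n0 : ℝ) = (a0 : ℝ) + m0 := by rw [hz] at hr; linarith
    have hn0' : n0 = a0 + m0 := by exact_mod_cast hn0
    omega
  · apply irrational_sqrt_two
    have hd : (n1 : ℝ) - ((a1 : ℝ) + m1) ≠ 0 := sub_ne_zero.mpr hz
    have hs2 : Real.sqrt 2 = (((a0 : ℝ) + m0) - n0) / ((n1 : ℝ) - ((a1 : ℝ) + m1)) := by
      field_simp
      linarith
    refine ⟨((a0 : ℚ) + m0 - n0) / ((n1 : ℚ) - ((a1 : ℚ) + m1)), ?_⟩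
    rw [hs2]
    push_cast
    ring

lemma pderiv_Fex (k l : Fin 2) (x : Fin 2 → ℂ) :
    pderivC (Fex k) l x = lamC k * (Pi.single l (1:ℂ) : Fin 2 → ℂ) k := by
  fin_cases k
  · have h : HasFDerivAt (Fex 0)
        (ContinuousLinearMap.proj 0 : (Fin 2 → ℂ) →L[ℂ] ℂ) x :=
      (ContinuousLinearMap.proj 0 : (Fin 2 → ℂ) →L[ℂ] ℂ).hasFDerivAt
    show fderiv ℂ (Fex 0) x (Pi.single l 1) = _
    rw [h.fderiv]
    simp [lamC]
  · have h : HasFDerivAt (Fex 1)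
        ((Real.sqrt 2 : ℂ) • (ContinuousLinearMap.proj 1 : (Fin 2 → ℂ) →L[ℂ] ℂ)) x := by
      have := ((ContinuousLinearMap.proj 1 : (Fin 2 → ℂ) →L[ℂ] ℂ).hasFDerivAt
        (x := x)).const_mul (Real.sqrt 2 : ℂ)
      exact this
    show fderiv ℂ (Fex 1) x (Pi.single l 1) = _
    rw [h.fderiv]
    simp [lamC]

/-- For `q > p`, the system `ẋ₁ = x₁, ẋ₂ = √2·x₂` admits no nonzero
analytic tensor invariant of type `(p,q)` near the origin of `ℂ²`. -/
theorem no_pq_invariant_of_sqrt2_system {p q : ℕ} (hpq : p < q)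
    (U : Set (Fin 2 → ℂ)) (hU : IsOpen U) (hUconn : IsPreconnected U)
    (h0 : (0 : Fin 2 → ℂ) ∈ U)
    (T : (Fin p → Fin 2) → (Fin q → Fin 2) → (Fin 2 → ℂ) → ℂ)
    (hTan : ∀ i j, AnalyticOnNhd ℂ (T i j) U)
    (hinv : ∀ i j, ∀ x ∈ U, lieDeriv Fex T i j x = 0) :
    ∀ i j, ∀ x ∈ U, T i j x = 0 := by
  intro i j
  obtain ⟨n0, n1, hn, hnsum⟩ := sum_lamC_exists Finset.univ i
  obtain ⟨m0, m1, hm, hmsum⟩ := sum_lamC_exists Finset.univ j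
  rw [Finset.card_univ, Fintype.card_fin] at hn hm
  set c : ℂ := (∑ b, lamC (i b)) - (∑ a, lamC (j a)) with hcdef
  have hc : ∀ L : List (Fin 2), c ≠ lamSum L := by
    intro L
    rw [hcdef, hnsum, hmsum]
    exact sqrt2_combination_ne hpq n0 n1 m0 m1 hn hm L
  have heq : ∀ x ∈ U, EulerOp (T i j) x = c * T i j x := by
    intro x hx
    have h := hinv i j x hx
    unfold lieDeriv at h
    have hA : ∀ a : Fin q,
        (∑ k : Fin 2, T i (Function.update j a k) x * pderivC (Fex k) (j a) x)
          = lamC (j a) * T i j x := by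
      intro a
      rw [Fin.sum_univ_two, pderiv_Fex 0 (j a) x, pderiv_Fex 1 (j a) x]
      obtain h2 | h2 : j a = 0 ∨ j a = 1 := by omega
      · have hupd : Function.update j a 0 = j := by rw [← h2]; exact Function.update_eq_self a j
        rw [h2, hupd]
        simp [lamC, mul_comm]
      · have hupd : Function.update j a 1 = j := by rw [← h2]; exact Function.update_eq_self a j
        rw [h2, hupd]
        simp [lamC, mul_comm]
    have hB : ∀ b : Fin p,
        (∑ l : Fin 2, T (Function.update i b l) j x * pderivC (Fex (i b)) l x)
          = lamC (i b) * T i j x := by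
      intro b
      rw [Fin.sum_univ_two, pderiv_Fex (i b) 0 x, pderiv_Fex (i b) 1 x]
      obtain h2 | h2 : i b = 0 ∨ i b = 1 := by omega
      · have hupd : Function.update i b 0 = i := by rw [← h2]; exact Function.update_eq_self b i
        rw [h2, hupd]
        simp [lamC, mul_comm]
      · have hupd : Function.update i b 1 = i := by rw [← h2]; exact Function.update_eq_self b i
        rw [h2, hupd]
        simp [lamC, mul_comm]
    rw [Finset.sum_congr rfl (fun a _ => hA a), Finset.sum_congr rfl (fun b _ => hB b),
      ← Finset.sum_mul, ← Finset.sum_mul] at h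
    have hfirst : (∑ s : Fin 2, Fex s x * pderivC (T i j) s x) = EulerOp (T i j) x := by
      rw [Fin.sum_univ_two]
      show Fex 0 x * _ + Fex 1 x * _ = _
      have e0 : Fex 0 x = x 0 := rfl
      have e1 : Fex 1 x = (Real.sqrt 2 : ℂ) * x 1 := rfl
      rw [e0, e1, EulerOp]
      try ring
    rw [hfirst] at h
    rw [hcdef]
    linear_combination h
  exact fun x hx => master hU hUconn h0 (hTan i j) hc heq x hx
end
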